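/- Let A be a ring such that every A-module is Gorenstein flat-cotorsion. Then A is Quasi-Frobenius, i.e., every projective A-module is injective. -/

import Mathlib

open CategoryTheory

universe u

noncomputable section

variable (A : Type u) [Ring A]

/-- `Ext^n_A(M,N)`, as a `ℤ`-module, for left modules over an arbitrary ring `A`. -/
abbrev extAb (n : ℕ) (M N : ModuleCat.{u} A) : ModuleCat.{u} ℤ :=
  ((Ext ℤ (ModuleCat.{u} A) n).obj (Opposite.op M)).obj N

/-- Vanishing of `Ext^n_A(M,N)`. -/
def ExtVanish (n : ℕ) (M N : ModuleCat.{u} A) : Prop :=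
  Subsingleton (extAb A n M N)

/-- The subgroup of `E ⊗_ℤ M` by which one divides to obtain `E ⊗_A M`,
for a right `A`-module `E` and a left `A`-module `M`. -/
def tensorRel (E : Type u) [AddCommGroup E] [Module Aᵐᵒᵖ E]
    (M : Type u) [AddCommGroup M] [Module A M] :
    Submodule ℤ (TensorProduct ℤ E M) :=
  Submodule.span ℤ {x | ∃ (e : E) (a : A) (m : M),
    x = (MulOpposite.op a • e) ⊗ₜ[ℤ] m - e ⊗ₜ[ℤ] (a • m)}

/-- The tensor product `E ⊗_A M` of a right `A`-module `E` and a left `A`-module `M`. -/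
abbrev RTensor (E : Type u) [AddCommGroup E] [Module Aᵐᵒᵖ E]
    (M : Type u) [AddCommGroup M] [Module A M] : Type u :=
  TensorProduct ℤ E M ⧸ tensorRel A E M

/-- Functoriality of `E ⊗_A -` in the left-module variable. -/
def RTensor.map (E : Type u) [AddCommGroup E] [Module Aᵐᵒᵖ E]
    {M N : Type u} [AddCommGroup M] [Module A M] [AddCommGroup N] [Module A N]
    (f : M →ₗ[A] N) : RTensor A E M →ₗ[ℤ] RTensor A E N :=
  Submodule.mapQ _ _ (LinearMap.lTensor E f.toAddMonoidHom.toIntLinearMap) (by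
    simp only [tensorRel]
    rw [Submodule.span_le]
    rintro x ⟨e, a, m, rfl⟩
    simp only [SetLike.mem_coe, Submodule.mem_comap, map_sub, LinearMap.lTensor_tmul]
    refine Submodule.subset_span ⟨e, a, f m, ?_⟩
    erw [map_sub, LinearMap.lTensor_tmul, LinearMap.lTensor_tmul]; simp [LinearMap.map_smul])

/-- Functoriality of `- ⊗_A M` in the right-module variable. -/
def RTensor.mapRight {E E' : Type u} [AddCommGroup E] [Module Aᵐᵒᵖ E]
    [AddCommGroup E'] [Module Aᵐᵒᵖ E']
    (M : Type u) [AddCommGroup M] [Module A M]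
    (g : E →ₗ[Aᵐᵒᵖ] E') : RTensor A E M →ₗ[ℤ] RTensor A E' M :=
  Submodule.mapQ _ _ (LinearMap.rTensor M g.toAddMonoidHom.toIntLinearMap) (by
    simp only [tensorRel]
    rw [Submodule.span_le]
    rintro x ⟨e, a, m, rfl⟩
    simp only [SetLike.mem_coe, Submodule.mem_comap, map_sub, LinearMap.rTensor_tmul]
    refine Submodule.subset_span ⟨g e, a, m, ?_⟩
    erw [map_sub, LinearMap.rTensor_tmul, LinearMap.rTensor_tmul]; simp [LinearMap.map_smul])

/-- A left `A`-module `M` is flat if `- ⊗_A M` preserves injectivity of maps of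
right `A`-modules. -/
def IsFlat (M : Type u) [AddCommGroup M] [Module A M] : Prop :=
  ∀ (E E' : Type u) [AddCommGroup E] [Module Aᵐᵒᵖ E] [AddCommGroup E'] [Module Aᵐᵒᵖ E']
    (g : E →ₗ[Aᵐᵒᵖ] E'), Function.Injective g →
      Function.Injective (RTensor.mapRight A M g)

/-- A right `A`-module `E` is flat if `E ⊗_A -` preserves injectivity of maps of
left `A`-modules. -/
def IsFlatRight (E : Type u) [AddCommGroup E] [Module Aᵐᵒᵖ E] : Prop :=
  ∀ (M N : Type u) [AddCommGroup M] [Module A M] [AddCommGroup N] [Module A N]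
    (f : M →ₗ[A] N), Function.Injective f →
      Function.Injective (RTensor.map A E f)

/-- An `A`-module `C` is cotorsion if `Ext^1_A(F,C) = 0` for every flat `F`. -/
def Cotorsion (M : ModuleCat.{u} A) : Prop :=
  ∀ F : ModuleCat.{u} A, IsFlat A F → ExtVanish A 1 F M

/-- Flat dimension at most `n`. -/
def FlatDimLE : ℕ → ModuleCat.{u} A → Prop
  | 0, M => IsFlat A M
  | n + 1, M => ∃ (F : ModuleCat.{u} A) (π : F ⟶ M), IsFlat A F ∧
      Function.Surjective π ∧
      FlatDimLE n (ModuleCat.of A (LinearMap.ker (π.hom : F →ₗ[A] M)))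

/-- Finite flat dimension. -/
def FiniteFlatDim (M : ModuleCat.{u} A) : Prop := ∃ n, FlatDimLE A n M

/-- An `A`-module `M` is strongly cotorsion if `Ext^1_A(L,M) = 0` for every `L` of
finite flat dimension. -/
def StronglyCotorsion (M : ModuleCat.{u} A) : Prop :=
  ∀ L : ModuleCat.{u} A, FiniteFlatDim A L → ExtVanish A 1 L M

/-- Projective dimension at most `n`. -/
def ProjDimLE : ℕ → ModuleCat.{u} A → Prop
  | 0, M => Module.Projective A M
  | n + 1, M => ∃ (F : ModuleCat.{u} A) (π : F ⟶ M), Module.Projective A F ∧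
      Function.Surjective π ∧
      ProjDimLE n (ModuleCat.of A (LinearMap.ker (π.hom : F →ₗ[A] M)))

/-- A `ℤ`-indexed complex of `A`-modules (differential of degree `-1`). -/
structure ModComplex where
  X : ℤ → ModuleCat.{u} A
  d : ∀ i : ℤ, X (i + 1) ⟶ X i
  dd : ∀ i : ℤ, d (i + 1) ≫ d i = 0

/-- Acyclicity (exactness at every degree) of a complex. -/
def ModComplex.Acyclic (C : ModComplex A) : Prop :=
  ∀ i : ℤ, LinearMap.range ((C.d (i + 1)).hom : C.X (i + 1 + 1) →ₗ[A] C.X (i + 1)) =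
    LinearMap.ker ((C.d i).hom : C.X (i + 1) →ₗ[A] C.X i)

/-- `G` is Gorenstein injective: a cycle of a totally acyclic complex of injectives. -/
def GorensteinInjective (G : ModuleCat.{u} A) : Prop :=
  ∃ C : ModComplex A,
    (∀ i, Module.Injective A (C.X i)) ∧ C.Acyclic ∧
    (∀ E : ModuleCat.{u} A, Module.Injective A E →
      ∀ (i : ℤ) (f : E ⟶ C.X (i + 1)), f ≫ C.d i = 0 →
        ∃ g : E ⟶ C.X (i + 1 + 1), g ≫ C.d (i + 1) = f) ∧
    Nonempty (G ≃ₗ[A] LinearMap.ker ((C.d (-1)).hom : C.X (-1 + 1) →ₗ[A] C.X (-1)))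

/-- `G` is Gorenstein projective: a cycle of a totally acyclic complex of projectives. -/
def GorensteinProjective (G : ModuleCat.{u} A) : Prop :=
  ∃ C : ModComplex A,
    (∀ i, Module.Projective A (C.X i)) ∧ C.Acyclic ∧
    (∀ Q : ModuleCat.{u} A, Module.Projective A Q →
      ∀ (i : ℤ) (f : C.X (i + 1) ⟶ Q), C.d (i + 1) ≫ f = 0 →
        ∃ g : C.X i ⟶ Q, C.d i ≫ g = f) ∧
    Nonempty (G ≃ₗ[A] LinearMap.ker ((C.d (-1)).hom : C.X (-1 + 1) →ₗ[A] C.X (-1)))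

/-- `G` is Gorenstein flat: a cycle of an acyclic complex of flats which stays acyclic
after applying `E ⊗_A -` for every injective right `A`-module `E`. -/
def GorensteinFlat (G : ModuleCat.{u} A) : Prop :=
  ∃ C : ModComplex A,
    (∀ i, IsFlat A (C.X i)) ∧ C.Acyclic ∧
    (∀ (E : Type u) [AddCommGroup E] [Module Aᵐᵒᵖ E], Module.Injective Aᵐᵒᵖ E →
      ∀ i : ℤ,
        LinearMap.range (RTensor.map A E ((C.d (i + 1)).hom : C.X (i + 1 + 1) →ₗ[A] C.X (i + 1))) =
        LinearMap.ker (RTensor.map A E ((C.d i).hom : C.X (i + 1) →ₗ[A] C.X i))) ∧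
    Nonempty (G ≃ₗ[A] LinearMap.ker ((C.d (-1)).hom : C.X (-1 + 1) →ₗ[A] C.X (-1)))

/-- Flat-cotorsion module. -/
def FlatCotorsion (M : ModuleCat.{u} A) : Prop := IsFlat A M ∧ Cotorsion A M

/-- `G` is Gorenstein flat-cotorsion: a cokernel of a totally acyclic complex of
flat-cotorsion modules. -/
def GorensteinFlatCotorsion (G : ModuleCat.{u} A) : Prop :=
  ∃ C : ModComplex A,
    (∀ i, FlatCotorsion A (C.X i)) ∧ C.Acyclic ∧
    (∀ W : ModuleCat.{u} A, FlatCotorsion A W →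
      ∀ (i : ℤ) (f : C.X (i + 1) ⟶ W), C.d (i + 1) ≫ f = 0 →
        ∃ g : C.X i ⟶ W, C.d i ≫ g = f) ∧
    Nonempty (G ≃ₗ[A]
      (C.X 0 ⧸ LinearMap.range ((C.d 0).hom : C.X (0 + 1) →ₗ[A] C.X 0)))

/-- Gorenstein injective dimension at most `n`: `M` has an injective coresolution whose
`n`-th cosyzygy is Gorenstein injective. -/
def GidLE : ℕ → ModuleCat.{u} A → Prop
  | 0, M => GorensteinInjective A M
  | n + 1, M => ∃ (I : ModuleCat.{u} A) (ι : M ⟶ I), Module.Injective A I ∧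
      Function.Injective ι ∧
      GidLE n (ModuleCat.of A (I ⧸ LinearMap.range (ι.hom : M →ₗ[A] I)))

/-- Injective dimension at most `n`. -/
def InjDimLE : ℕ → ModuleCat.{u} A → Prop
  | 0, M => Module.Injective A M
  | n + 1, M => ∃ (I : ModuleCat.{u} A) (ι : M ⟶ I), Module.Injective A I ∧
      Function.Injective ι ∧
      InjDimLE n (ModuleCat.of A (I ⧸ LinearMap.range (ι.hom : M →ₗ[A] I)))

/-- Gorenstein flat dimension at most `n`. -/
def GfdLE : ℕ → ModuleCat.{u} A → Prop
  | 0, M => GorensteinFlat A M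
  | n + 1, M => ∃ (F : ModuleCat.{u} A) (π : F ⟶ M), IsFlat A F ∧
      Function.Surjective π ∧
      GfdLE n (ModuleCat.of A (LinearMap.ker (π.hom : F →ₗ[A] M)))

/-- The Gorenstein injective dimension, as an extended natural number. -/
def gid (M : ModuleCat.{u} A) : ℕ∞ := sInf {n : ℕ∞ | ∃ k : ℕ, n = k ∧ GidLE A k M}

/-- The injective dimension, as an extended natural number. -/
def injDim (M : ModuleCat.{u} A) : ℕ∞ := sInf {n : ℕ∞ | ∃ k : ℕ, n = k ∧ InjDimLE A k M}

/-- The projective dimension, as an extended natural number. -/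
def projDim (M : ModuleCat.{u} A) : ℕ∞ := sInf {n : ℕ∞ | ∃ k : ℕ, n = k ∧ ProjDimLE A k M}

/-- The finitistic projective dimension of `A`. -/
def FPD : ℕ∞ := sSup {d : ℕ∞ | ∃ M : ModuleCat.{u} A, d = projDim A M ∧ d ≠ ⊤}

/-- `D` is an `n`-th cosyzygy of `N` with respect to an injective coresolution:
there is an exact sequence `0 → N → E_0 → ⋯ → E_{n-1} → D → 0` with the `E_i` injective. -/
def CosyzygyOf : ℕ → ModuleCat.{u} A → ModuleCat.{u} A → Prop
  | 0, N, D => Nonempty (N ≃ₗ[A] D)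
  | n + 1, N, D => ∃ (E : ModuleCat.{u} A) (ι : N ⟶ E), Module.Injective A E ∧
      Function.Injective ι ∧
      CosyzygyOf n (ModuleCat.of A (E ⧸ LinearMap.range (ι.hom : N →ₗ[A] E))) D

/-- `M` is an `n`-th syzygy of `N` with respect to a resolution by flat modules:
there is an exact sequence `0 → M → F_{n-1} → ⋯ → F_0 → N → 0` with the `F_i` flat. -/
def SyzygyOf : ℕ → ModuleCat.{u} A → ModuleCat.{u} A → Prop
  | 0, M, N => Nonempty (M ≃ₗ[A] N)
  | n + 1, M, N => ∃ (F : ModuleCat.{u} A) (ι : M ⟶ F), IsFlat A F ∧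
      Function.Injective ι ∧
      SyzygyOf n (ModuleCat.of A (F ⧸ LinearMap.range (ι.hom : M →ₗ[A] F))) N

end

noncomputable section Aux

open CategoryTheory

variable {A : Type u} [Ring A]

namespace Aux

/-- Extensionality for maps out of `RTensor`. -/
lemma rtensor_hom_ext {E : Type u} [AddCommGroup E] [Module Aᵐᵒᵖ E]
    {M : Type u} [AddCommGroup M] [Module A M]
    {T : Type*} [AddCommGroup T] [Module ℤ T]
    {φ ψ : RTensor A E M →ₗ[ℤ] T}
    (h : ∀ (e : E) (m : M),
      φ (Submodule.Quotient.mk (e ⊗ₜ[ℤ] m)) = ψ (Submodule.Quotient.mk (e ⊗ₜ[ℤ] m))) :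
    φ = ψ := by
  apply LinearMap.ext
  intro x
  obtain ⟨y, rfl⟩ := Submodule.Quotient.mk_surjective _ x
  induction y using TensorProduct.induction_on with
  | zero => simp
  | tmul e m => exact h e m
  | add a b ha hb => simp only [Submodule.Quotient.mk_add, map_add, ha, hb]

lemma map_mk_tmul {E : Type u} [AddCommGroup E] [Module Aᵐᵒᵖ E]
    {M N : Type u} [AddCommGroup M] [Module A M] [AddCommGroup N] [Module A N]
    (f : M →ₗ[A] N) (e : E) (m : M) :
    RTensor.map A E f (Submodule.Quotient.mk (e ⊗ₜ[ℤ] m)) =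
      Submodule.Quotient.mk (e ⊗ₜ[ℤ] (f m)) := by
  rfl

lemma mapRight_mk_tmul {E E' : Type u} [AddCommGroup E] [Module Aᵐᵒᵖ E]
    [AddCommGroup E'] [Module Aᵐᵒᵖ E']
    {M : Type u} [AddCommGroup M] [Module A M]
    (g : E →ₗ[Aᵐᵒᵖ] E') (e : E) (m : M) :
    RTensor.mapRight A M g (Submodule.Quotient.mk (e ⊗ₜ[ℤ] m)) =
      Submodule.Quotient.mk ((g e) ⊗ₜ[ℤ] m) := by
  rfl

lemma map_comp_eq {E : Type u} [AddCommGroup E] [Module Aᵐᵒᵖ E]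
    {M N L : Type u} [AddCommGroup M] [Module A M] [AddCommGroup N] [Module A N]
    [AddCommGroup L] [Module A L] (f : M →ₗ[A] N) (f' : N →ₗ[A] L) (x : RTensor A E M) :
    RTensor.map A E f' (RTensor.map A E f x) = RTensor.map A E (f' ∘ₗ f) x := by
  have : (RTensor.map A E f') ∘ₗ (RTensor.map A E f) = RTensor.map A E (f' ∘ₗ f) :=
    rtensor_hom_ext (fun e m => by simp [map_mk_tmul])
  exact congrFun (congrArg (fun (g : _ →ₗ[ℤ] _) => (g : _ → _)) this) x

lemma map_natural {E E' : Type u} [AddCommGroup E] [Module Aᵐᵒᵖ E]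
    [AddCommGroup E'] [Module Aᵐᵒᵖ E']
    {M N : Type u} [AddCommGroup M] [Module A M] [AddCommGroup N] [Module A N]
    (g : E →ₗ[Aᵐᵒᵖ] E') (f : M →ₗ[A] N) (x : RTensor A E M) :
    RTensor.map A E' f (RTensor.mapRight A M g x) =
      RTensor.mapRight A N g (RTensor.map A E f x) := by
  have : (RTensor.map A E' f) ∘ₗ (RTensor.mapRight A M g) =
      (RTensor.mapRight A N g) ∘ₗ (RTensor.map A E f) :=
    rtensor_hom_ext (fun e m => by simp [map_mk_tmul, mapRight_mk_tmul])
  exact congrFun (congrArg (fun (g : _ →ₗ[ℤ] _) => (g : _ → _)) this) x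

/-- Flatness passes to retracts. -/
lemma isFlat_retract {X P : ModuleCat.{u} A} (σ : P →ₗ[A] X) (t : X →ₗ[A] P)
    (ht : ∀ p, t (σ p) = p) (hX : IsFlat A X) : IsFlat A P := by
  intro E E' _ _ _ _ g hg
  have hσinj : ∀ (F : Type u) [AddCommGroup F] [Module Aᵐᵒᵖ F],
      Function.Injective (RTensor.map A F σ) := by
    intro F _ _ x y hxy
    have := congrArg (RTensor.map A F t) hxy
    rw [map_comp_eq, map_comp_eq] at this
    have hid : (t ∘ₗ σ) = LinearMap.id := LinearMap.ext ht
    rw [hid] at this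
    have hmapid : ∀ z : RTensor A F P, RTensor.map A F (LinearMap.id) z = z := by
      intro z
      have : RTensor.map A F (LinearMap.id : P →ₗ[A] P) = LinearMap.id :=
        rtensor_hom_ext (fun e m => by simp [map_mk_tmul])
      rw [this]; rfl
    rwa [hmapid, hmapid] at this
  intro x y hxy
  have h1 : RTensor.map A E' σ (RTensor.mapRight A (P : Type u) g x) =
      RTensor.map A E' σ (RTensor.mapRight A (P : Type u) g y) := by rw [hxy]
  rw [map_natural, map_natural] at h1
  exact hσinj E (hX E E' g hg h1)

/-- `ExtVanish` passes to retracts in the second variable. -/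
lemma extVanish_retract (F : ModuleCat.{u} A) {X P : ModuleCat.{u} A}
    (σ : P ⟶ X) (t : X ⟶ P) (ht : σ ≫ t = 𝟙 P)
    (hX : ExtVanish A 1 F X) : ExtVanish A 1 F P := by
  unfold ExtVanish at hX ⊢
  haveI := hX
  set G := (Ext ℤ (ModuleCat.{u} A) 1).obj (Opposite.op F)
  constructor
  intro a b
  have : G.map σ ≫ G.map t = 𝟙 (G.obj P) := by
    rw [← G.map_comp, ht, G.map_id]
  have ha : (G.map t) ((G.map σ) a) = a := by
    have := congrArg (fun (f : G.obj P ⟶ G.obj P) => f a) this; simpa using this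
  have hb : (G.map t) ((G.map σ) b) = b := by
    have := congrArg (fun (f : G.obj P ⟶ G.obj P) => f b) this; simpa using this
  rw [← ha, ← hb]
  congr 1
  exact Subsingleton.elim _ _

end Aux
end Aux

/-- If `Ext¹(F, Cm)` vanishes, every short exact sequence `0 → Cm → Y → F → 0` splits. -/
lemma extVanish_split {A : Type u} [Ring A] (F Cm : ModuleCat.{u} A)
    (hv : ExtVanish A 1 F Cm)
    (Y : Type u) [AddCommGroup Y] [Module A Y] (i : Cm →ₗ[A] Y) (p : Y →ₗ[A] F)
    (hi : Function.Injective i) (hp : Function.Surjective p)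
    (hker : ∀ y, p y = 0 ↔ y ∈ LinearMap.range i) :
    ∃ s : F →ₗ[A] Y, ∀ x, p (s x) = x := by
  classical
  set P : CategoryTheory.ProjectiveResolution F := CategoryTheory.ProjectiveResolution.of F
    with hP
  set K := P.complex.linearYonedaObj ℤ Cm with hK
  -- homology of `K` at 1 vanishes
  haveI hsub : Subsingleton (extAb A 1 F Cm) := hv
  have hiso := P.isoExt (R := ℤ) 1 Cm
  haveI : Subsingleton ((CategoryTheory.forget (ModuleCat ℤ)).obj (K.homology 1)) :=
    (((CategoryTheory.forget (ModuleCat ℤ)).mapIso hiso.symm).toEquiv).subsingleton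
  haveI : Subsingleton ((K.homology 1) : Type u) := ‹_›
  have hzero : CategoryTheory.Limits.IsZero (K.homology 1) :=
    ModuleCat.isZero_of_subsingleton _
  have hexact : (K.sc' 0 1 2).Exact := by
    rw [← HomologicalComplex.exactAt_iff' K 0 1 2 (by simp) (by simp)]
    rw [HomologicalComplex.exactAt_iff_isZero_homology]
    exact hzero
  -- the augmentation `pz : P₀ → F`
  let fiso := HomologicalComplex.singleObjXSelf (ComplexShape.down ℕ) 0 F
  let pz : P.complex.X 0 ⟶ F := P.π.f 0 ≫ fiso.hom
  have hpz_surj : Function.Surjective pz := by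
    haveI : CategoryTheory.Epi pz := CategoryTheory.epi_comp _ _
    exact (ModuleCat.epi_iff_surjective pz).mp ‹_›
  have hpz_zero : ∀ z, pz (P.complex.d 1 0 z) = 0 := by
    intro z
    have : P.complex.d 1 0 ≫ pz = 0 := by
      rw [show P.complex.d 1 0 ≫ pz = (P.complex.d 1 0 ≫ P.π.f 0) ≫ fiso.hom by
        exact (CategoryTheory.Category.assoc _ _ _).symm]
      rw [P.complex_d_comp_π_f_zero]
      exact CategoryTheory.Limits.zero_comp
    calc pz (P.complex.d 1 0 z) = (P.complex.d 1 0 ≫ pz) z := (comp_apply _ _ _).symm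
    _ = 0 := by rw [this]; rfl
  have hpz_exact : ∀ x, pz x = 0 → ∃ z, P.complex.d 1 0 z = x := by
    intro x hx
    have hfiso : Function.Injective fiso.hom := by
      haveI : CategoryTheory.Mono fiso.hom := inferInstance
      exact (ModuleCat.mono_iff_injective _).mp ‹_›
    have : P.π.f 0 x = 0 := by
      apply hfiso
      rw [map_zero]
      calc fiso.hom (P.π.f 0 x) = pz x := (comp_apply _ _ _).symm
      _ = 0 := hx
    exact (ShortComplex.moduleCat_exact_iff _).mp P.exact₀ x this
  -- lift the augmentation along `p`
  haveI : Module.Projective A (P.complex.X 0) :=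
    (IsProjective.iff_projective (P.complex.X 0)).mpr (by
      have : CategoryTheory.Projective (P.complex.X 0) := inferInstance
      exact this)
  obtain ⟨α, hα⟩ := Module.projective_lifting_property p pz.hom hp
  have hαapp : ∀ x, p (α x) = pz x := fun x => by have := LinearMap.congr_fun hα x; simpa using this
  -- the boundary map `β : P₁ → Cm`
  have hmem : ∀ z, α (P.complex.d 1 0 z) ∈ LinearMap.range i := by
    intro z
    rw [← hker]
    rw [hαapp, hpz_zero]
  let β0 : P.complex.X 1 →ₗ[A] Cm :=
    (LinearEquiv.ofInjective i hi).symm.toLinearMap ∘ₗ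
      LinearMap.codRestrict (LinearMap.range i) (α ∘ₗ (P.complex.d 1 0).hom) hmem
  have hβ0 : ∀ z, i (β0 z) = α (P.complex.d 1 0 z) := by
    intro z
    have := LinearEquiv.ofInjective_apply i (h := hi) (β0 z)
    rw [← this]
    simp only [β0, LinearMap.comp_apply, LinearEquiv.coe_coe, LinearEquiv.apply_symm_apply]
    rfl
  -- `β0` is a cycle in the Hom-complex
  have hd12 : (P.complex.linearYonedaObj ℤ Cm).d 1 2
      = ModuleCat.ofHom (Linear.leftComp ℤ Cm (P.complex.d 2 1)) :=
    ChainComplex.linearYonedaObj_d P.complex ℤ Cm 1 2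
  have hβcycle : (P.complex.linearYonedaObj ℤ Cm).d 1 2 (ModuleCat.ofHom β0) = 0 := by
    rw [hd12]
    show P.complex.d 2 1 ≫ (ModuleCat.ofHom β0) = 0
    apply ModuleCat.hom_ext
    apply LinearMap.ext
    intro w
    show β0 (P.complex.d 2 1 w) = 0
    apply hi
    rw [map_zero]
    rw [hβ0]
    have hz : P.complex.d 1 0 (P.complex.d 2 1 w) = 0 := by
      have h2 : P.complex.d 2 1 ≫ P.complex.d 1 0 = 0 := P.complex.d_comp_d 2 1 0
      calc P.complex.d 1 0 (P.complex.d 2 1 w) = (P.complex.d 2 1 ≫ P.complex.d 1 0) w :=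
        (comp_apply _ _ _).symm
      _ = 0 := by rw [h2]; rfl
    rw [hz, map_zero]
  -- exactness gives `γ` with `d ≫ γ = β0`
  obtain ⟨γ, hγ⟩ := (ShortComplex.moduleCat_exact_iff _).mp hexact
    (ModuleCat.ofHom β0) hβcycle
  let γl : P.complex.X 0 ⟶ Cm := γ
  have hd01 : (P.complex.linearYonedaObj ℤ Cm).d 0 1
      = ModuleCat.ofHom (Linear.leftComp ℤ Cm (P.complex.d 1 0)) :=
    ChainComplex.linearYonedaObj_d P.complex ℤ Cm 0 1
  have hγc : P.complex.d 1 0 ≫ γl = (ModuleCat.ofHom β0) := by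
    have hγ2 : ModuleCat.ofHom (Linear.leftComp ℤ Cm (P.complex.d 1 0)) γl
        = (ModuleCat.ofHom β0) := by
      rw [← hd01]; exact hγ
    exact hγ2
  have hγ' : ∀ z, γl (P.complex.d 1 0 z) = β0 z := fun z => by
    calc γl (P.complex.d 1 0 z) = (P.complex.d 1 0 ≫ γl) z := (comp_apply _ _ _).symm
    _ = _ := by rw [hγc]; rfl
  -- the corrected lift descends to a section
  let μ : P.complex.X 0 →ₗ[A] Y := α - (i ∘ₗ γl.hom)
  have hμker : LinearMap.ker pz.hom ≤ LinearMap.ker μ := by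
    intro x hx
    obtain ⟨z, rfl⟩ := hpz_exact x hx
    simp only [LinearMap.mem_ker, μ, LinearMap.sub_apply, LinearMap.comp_apply]
    rw [show γl.hom (P.complex.d 1 0 z) = β0 z from hγ' z,
      hβ0, sub_self]
  let e := LinearMap.quotKerEquivOfSurjective pz.hom hpz_surj
  let s : F →ₗ[A] Y :=
    (Submodule.liftQ (LinearMap.ker pz.hom) μ hμker) ∘ₗ
      e.symm.toLinearMap
  refine ⟨s, fun x => ?_⟩
  obtain ⟨x0, rfl⟩ := hpz_surj x
  have hesymm : e.symm (pz x0) = Submodule.Quotient.mk x0 := by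
    apply e.injective
    rw [LinearEquiv.apply_symm_apply]
    show pz x0 = e (Submodule.Quotient.mk x0)
    simp [e, LinearMap.quotKerEquivOfSurjective, LinearMap.quotKerEquivRange]
  have hs : s (pz x0) = μ x0 := by
    simp only [s, LinearMap.comp_apply, LinearEquiv.coe_coe, hesymm, Submodule.liftQ_apply]
  rw [hs]
  simp only [μ, LinearMap.sub_apply, LinearMap.comp_apply, map_sub]
  have hpi : p (i (γl.hom x0)) = 0 := (hker _).mpr ⟨_, rfl⟩
  rw [hαapp, hpi, sub_zero]

/-- If every module is Gorenstein flat-cotorsion, a flat-cotorsion module splits off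
from every module containing it. -/
lemma splitOff {A : Type u} [Ring A] (h : ∀ M : ModuleCat.{u} A, GorensteinFlatCotorsion A M)
    (P : ModuleCat.{u} A) (hfc : FlatCotorsion A P)
    (Q : Type u) [AddCommGroup Q] [Module A Q] (j : (P : Type u) →ₗ[A] Q)
    (hj : Function.Injective j) :
    ∃ r : Q →ₗ[A] (P : Type u), ∀ x, r (j x) = x := by
  classical
  set N := ModuleCat.of A (Q ⧸ LinearMap.range j) with hN
  let q : Q →ₗ[A] (N : Type u) := (LinearMap.range j).mkQ
  have hq_surj : Function.Surjective q := Submodule.mkQ_surjective _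
  have hq_ker : ∀ y, q y = 0 ↔ y ∈ LinearMap.range j := fun y =>
    Submodule.Quotient.mk_eq_zero _
  obtain ⟨C, hfcC, -, hlift, ⟨e⟩⟩ := h N
  set Z := LinearMap.range (C.d 0).hom with hZ
  let π0 : (C.X 0 : Type u) →ₗ[A] (N : Type u) := e.symm.toLinearMap ∘ₗ Z.mkQ
  have hπ0_surj : Function.Surjective π0 := by
    intro n
    obtain ⟨x, hx⟩ := Submodule.mkQ_surjective Z (e n)
    exact ⟨x, by simp only [π0, LinearMap.comp_apply, LinearEquiv.coe_coe, hx,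
      LinearEquiv.symm_apply_apply]⟩
  have hπ0_d : ∀ z, π0 ((C.d 0).hom z) = 0 := by
    intro z
    have : Z.mkQ ((C.d 0).hom z) = 0 :=
      (Submodule.Quotient.mk_eq_zero _).mpr ⟨z, rfl⟩
    simp only [π0, LinearMap.comp_apply, this, map_zero]
  have hπ0_ker : ∀ x, π0 x = 0 ↔ x ∈ Z := by
    intro x
    constructor
    · intro hx
      have : Z.mkQ x = 0 := by
        have := congrArg e hx
        simpa only [π0, LinearMap.comp_apply, LinearEquiv.coe_coe,
          LinearEquiv.apply_symm_apply, map_zero] using this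
      exact (Submodule.Quotient.mk_eq_zero _).mp this
    · intro hx
      have : Z.mkQ x = 0 := (Submodule.Quotient.mk_eq_zero _).mpr hx
      simp only [π0, LinearMap.comp_apply, this, map_zero]
  -- the pullback of `π0` and `q`
  let D : ((C.X 0 : Type u) × Q) →ₗ[A] (N : Type u) :=
    π0 ∘ₗ LinearMap.fst A _ _ - q ∘ₗ LinearMap.snd A _ _
  set T := LinearMap.ker D with hT
  let p1 : (T : Type u) →ₗ[A] (C.X 0 : Type u) := LinearMap.fst A _ _ ∘ₗ T.subtype
  let p2 : (T : Type u) →ₗ[A] Q := LinearMap.snd A _ _ ∘ₗ T.subtype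
  have hTmem : ∀ x : (C.X 0 : Type u) × Q, x ∈ T ↔ π0 x.1 = q x.2 := by
    intro x
    simp only [hT, LinearMap.mem_ker, D, LinearMap.sub_apply, LinearMap.comp_apply,
      LinearMap.fst_apply, LinearMap.snd_apply, sub_eq_zero]
  have hp1_surj : Function.Surjective p1 := by
    intro x
    obtain ⟨u, hu⟩ := hq_surj (π0 x)
    exact ⟨⟨(x, u), (hTmem _).mpr (by simp [hu])⟩, rfl⟩
  let i' : (P : Type u) →ₗ[A] (T : Type u) :=
    LinearMap.codRestrict T (LinearMap.prod 0 j)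
      (fun y => (hTmem _).mpr (by
        show π0 ((0 : (P : Type u) →ₗ[A] (C.X 0 : Type u)) y) = q (j y)
        rw [LinearMap.zero_apply, map_zero]
        exact ((hq_ker (j y)).mpr ⟨y, rfl⟩).symm))
  have hi'_app : ∀ y, (i' y : (C.X 0 : Type u) × Q) = (0, j y) := fun y => rfl
  have hi' : Function.Injective i' := by
    intro a b hab
    apply hj
    have := congrArg (fun t : (T : Type u) => (t : (C.X 0 : Type u) × Q).2) hab
    simpa [hi'_app] using this
  have hker' : ∀ tt : (T : Type u), p1 tt = 0 ↔ tt ∈ LinearMap.range i' := by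
    intro tt
    constructor
    · intro htt
      have h1 : ((tt : (C.X 0 : Type u) × Q).1) = 0 := htt
      have h2 : q ((tt : (C.X 0 : Type u) × Q).2) = 0 := by
        rw [← (hTmem _).mp tt.2, h1, map_zero]
      obtain ⟨y, hy⟩ := (hq_ker _).mp h2
      exact ⟨y, Subtype.ext (Prod.ext (by simp [hi'_app, h1])
        (by simp [hi'_app, hy]))⟩
    · rintro ⟨y, rfl⟩
      show ((0 : (C.X 0 : Type u)), j y).1 = 0
      rfl
  -- split the pullback sequence using cotorsion of `P` and flatness of `C.X 0`
  obtain ⟨s1, hs1⟩ := extVanish_split (C.X 0) P (hfc.2 (C.X 0) (hfcC 0).1)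
    (T : Type u) i' p1 hi' hp1_surj hker'
  let lam : (C.X 0 : Type u) →ₗ[A] Q := p2 ∘ₗ s1
  have hlam : ∀ x, q (lam x) = π0 x := by
    intro x
    have h1 := (hTmem _).mp (s1 x).2
    have h2 : ((s1 x : (C.X 0 : Type u) × Q).1) = x := hs1 x
    show q ((s1 x : (C.X 0 : Type u) × Q).2) = π0 x
    rw [← h1, h2]
  -- the lifted boundary map into `P`
  have hmemj : ∀ z, lam ((C.d 0).hom z) ∈ LinearMap.range j :=
    fun z => (hq_ker _).mp (by rw [hlam, hπ0_d])
  let f' : (C.X (0 + 1) : Type u) →ₗ[A] (P : Type u) :=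
    (LinearEquiv.ofInjective j hj).symm.toLinearMap ∘ₗ
      LinearMap.codRestrict (LinearMap.range j)
        (lam ∘ₗ (C.d 0).hom) hmemj
  have hf' : ∀ z, j (f' z) = lam ((C.d 0).hom z) := by
    intro z
    have := LinearEquiv.ofInjective_apply j (h := hj) (f' z)
    rw [← this]
    simp only [f', LinearMap.comp_apply, LinearEquiv.coe_coe, LinearEquiv.apply_symm_apply]
    rfl
  have hf'd : C.d (0 + 1) ≫ (ModuleCat.ofHom f') = 0 := by
    apply ModuleCat.hom_ext
    apply LinearMap.ext
    intro w
    show f' ((C.d (0 + 1)).hom w) = 0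
    apply hj
    rw [map_zero, hf']
    have hz : (C.d 0).hom
        ((C.d (0 + 1)).hom w) = 0 := by
      calc (C.d 0).hom
            ((C.d (0 + 1)).hom w)
          = (C.d (0 + 1) ≫ C.d 0) w := (comp_apply _ _ _).symm
        _ = 0 := by rw [C.dd 0]; rfl
    rw [hz, map_zero]
  obtain ⟨g, hg⟩ := hlift P hfc 0 (ModuleCat.ofHom f') hf'd
  have hgapp : ∀ z, g.hom ((C.d 0).hom z) = f' z := by
    intro z
    calc g.hom ((C.d 0).hom z)
        = (C.d 0 ≫ g) z := (comp_apply _ _ _).symm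
      _ = f' z := by rw [hg]; rfl
  -- descend to a section of `q`
  let μ : (C.X 0 : Type u) →ₗ[A] Q := lam - (j ∘ₗ g.hom)
  have hμker : Z ≤ LinearMap.ker μ := by
    rintro x ⟨z, rfl⟩
    simp only [LinearMap.mem_ker, μ, LinearMap.sub_apply, LinearMap.comp_apply]
    rw [hgapp, hf', sub_self]
  let s' : (N : Type u) →ₗ[A] Q := (Submodule.liftQ Z μ hμker) ∘ₗ e.toLinearMap
  have hs'q : ∀ n, q (s' n) = n := by
    intro n
    obtain ⟨x, hx⟩ := Submodule.mkQ_surjective Z (e n)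
    rw [Submodule.mkQ_apply] at hx
    have h1 : s' n = μ x := by
      simp only [s', LinearMap.comp_apply, LinearEquiv.coe_coe, ← hx, Submodule.liftQ_apply]
    have h2 : q (μ x) = π0 x := by
      simp only [μ, LinearMap.sub_apply, LinearMap.comp_apply, map_sub]
      rw [hlam, (hq_ker _).mpr ⟨g.hom x, rfl⟩, sub_zero]
    have h3 : π0 x = n := by
      simp only [π0, LinearMap.comp_apply, LinearEquiv.coe_coe, Submodule.mkQ_apply, hx,
        LinearEquiv.symm_apply_apply]
    rw [h1, h2, h3]
  -- construct the retraction
  let ρ : Q →ₗ[A] Q := LinearMap.id - s' ∘ₗ q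
  have hρ : ∀ x : Q, ρ x ∈ LinearMap.range j := by
    intro x
    apply (hq_ker _).mp
    simp only [ρ, LinearMap.sub_apply, LinearMap.id_apply, LinearMap.comp_apply, map_sub]
    rw [hs'q, sub_self]
  refine ⟨(LinearEquiv.ofInjective j hj).symm.toLinearMap ∘ₗ
    LinearMap.codRestrict (LinearMap.range j) ρ hρ, fun x => ?_⟩
  apply hj
  have hjr : ∀ (w : Q) (hw : w ∈ LinearMap.range j),
      j ((LinearEquiv.ofInjective j hj).symm ⟨w, hw⟩) = w := by
    intro w hw
    have := LinearEquiv.ofInjective_apply j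
      (h := hj) ((LinearEquiv.ofInjective j hj).symm ⟨w, hw⟩)
    rw [LinearEquiv.apply_symm_apply] at this
    exact this.symm
  have h1 : ρ (j x) = j x := by
    simp only [ρ, LinearMap.sub_apply, LinearMap.id_apply, LinearMap.comp_apply]
    rw [(hq_ker _).mpr ⟨x, rfl⟩, map_zero, sub_zero]
  show j ((LinearEquiv.ofInjective j hj).symm
    (LinearMap.codRestrict (LinearMap.range j) ρ hρ (j x))) = j x
  rw [show LinearMap.codRestrict (LinearMap.range j) ρ hρ (j x)
      = ⟨ρ (j x), hρ (j x)⟩ from rfl]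
  rw [hjr]
  exact h1

/-- if every module is Gorenstein flat-cotorsion, then `A` is
Quasi-Frobenius: every projective module is injective. -/
theorem stmt12 (A : Type u) [Ring A]
    (h : ∀ M : ModuleCat.{u} A, GorensteinFlatCotorsion A M) :
    ∀ P : ModuleCat.{u} A, Module.Projective A P → Module.Injective A P := by
  intro P hP
  haveI := hP
  -- `P` is a retract of a flat-cotorsion module, hence flat-cotorsion
  obtain ⟨CP, hCPfc, -, -, ⟨eP⟩⟩ := h P
  set ZP := LinearMap.range (CP.d 0).hom with hZP
  let t : (CP.X 0 : Type u) →ₗ[A] (P : Type u) := eP.symm.toLinearMap ∘ₗ ZP.mkQ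
  have ht_surj : Function.Surjective t := by
    intro x
    obtain ⟨y, hy⟩ := Submodule.mkQ_surjective ZP (eP x)
    exact ⟨y, by simp only [t, LinearMap.comp_apply, LinearEquiv.coe_coe, hy,
      LinearEquiv.symm_apply_apply]⟩
  obtain ⟨σ, hσ⟩ := Module.projective_lifting_property t
    (LinearMap.id : (P : Type u) →ₗ[A] (P : Type u)) ht_surj
  have hσt : ∀ x : (P : Type u), t (σ x) = x := fun x => by
    have := LinearMap.congr_fun hσ x; simpa using this
  have hflatP : IsFlat A P := Aux.isFlat_retract σ t hσt (hCPfc 0).1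
  have hcotP : Cotorsion A P := by
    intro Fm hFm
    exact Aux.extVanish_retract Fm (ModuleCat.ofHom σ) (ModuleCat.ofHom t)
      (by apply ModuleCat.hom_ext; apply LinearMap.ext; intro x; exact hσt x) ((hCPfc 0).2 Fm hFm)
  -- now prove injectivity via the pushout construction
  refine ⟨?_⟩
  intro X Y _ _ _ _ f hf g
  let W := LinearMap.range (LinearMap.prod g (-f))
  let j : (P : Type u) →ₗ[A] ((↥P × Y) ⧸ W) := W.mkQ ∘ₗ LinearMap.inl A _ _
  have hjinj : Function.Injective j := by
    intro a b hab
    have h0 : W.mkQ (((a, 0) : ↥P × Y) - ((b, 0) : ↥P × Y)) = 0 := by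
      rw [map_sub]
      exact sub_eq_zero.mpr hab
    have hmem : (((a - b, 0) : ↥P × Y)) ∈ W := by
      rw [← Submodule.Quotient.mk_eq_zero W, ← Submodule.mkQ_apply]
      convert h0 using 2
      simp [Prod.ext_iff]
    obtain ⟨x, hx⟩ := hmem
    have hx1 : g x = a - b := congrArg Prod.fst hx
    have hx2 : -(f x) = 0 := congrArg Prod.snd hx
    have hx0 : x = 0 := hf (by rw [map_zero]; exact neg_eq_zero.mp hx2)
    rw [hx0, map_zero] at hx1
    exact sub_eq_zero.mp hx1.symm
  obtain ⟨r, hr⟩ := splitOff h P ⟨hflatP, hcotP⟩ _ j hjinj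
  refine ⟨r ∘ₗ (W.mkQ ∘ₗ LinearMap.inr A _ _), fun x => ?_⟩
  have hmk : W.mkQ ((((0 : ↥P), f x) : ↥P × Y)) = j (g x) := by
    show W.mkQ _ = W.mkQ _
    rw [Submodule.mkQ_apply, Submodule.mkQ_apply]
    apply (Submodule.Quotient.eq W).mpr
    show (((0 : ↥P), f x) : ↥P × Y) - (((g x, 0)) : ↥P × Y) ∈ W
    have : (((0 : ↥P), f x) : ↥P × Y) - (((g x, 0)) : ↥P × Y)
        = -(((g x, -(f x))) : ↥P × Y) := by simp [Prod.ext_iff]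
    rw [this]
    exact W.neg_mem ⟨x, rfl⟩
  show r (W.mkQ ((((0 : ↥P), f x)) : ↥P × Y)) = g x
  rw [hmk, hr]
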